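/- arXiv:2002.11414 — 3 statements merged into one kernel-verified Lean document; each statement's English description precedes it below -/
import Mathlib

section
/- Let W and Q be probability measures with W ≪ Q, α > 1 with D_α(W‖Q) < ∞, and let W^{(α)} be the order-α tilted probability measure. Then for Λ = ln(dW/dQ), the identity ln(dW^{(α)}/dW) = D(W^{(α)}‖W) + (α−1)·(Λ − E_{W^{(α)}}[Λ]) holds W^{(α)}-almost surely. -/
open Real BigOperators Finset

/-- A probability mass function on a finite type, represented as a real-valued function. -/
def IsPmf {Y : Type*} [Fintype Y] (p : Y → ℝ) : Prop :=
  (∀ y, 0 ≤ p y) ∧ ∑ y, p y = 1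

/-- Absolute continuity for pmfs on a finite type. -/
def AbsCont {Y : Type*} [Fintype Y] (p q : Y → ℝ) : Prop :=
  ∀ y, q y = 0 → p y = 0

/-- Kullback–Leibler divergence (relative entropy). -/
noncomputable def klD {Y : Type*} [Fintype Y] (p q : Y → ℝ) : ℝ :=
  ∑ y, p y * Real.log (p y / q y)

/-- Rényi divergence of order α (Kullback–Leibler divergence at α = 1). -/
noncomputable def renyiD {Y : Type*} [Fintype Y] (α : ℝ) (p q : Y → ℝ) : ℝ :=
  if α = 1 then klD p q
  else (α - 1)⁻¹ * Real.log (∑ y, p y ^ α * q y ^ (1 - α))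

/-- The order-α tilted probability measure of p with respect to q. -/
noncomputable def tilted {Y : Type*} [Fintype Y] (α : ℝ) (p q : Y → ℝ) : Y → ℝ :=
  fun y => Real.exp ((1 - α) * renyiD α p q) * p y ^ α * q y ^ (1 - α)

/-- log-density identity for the tilted measure w.r.t. W. -/
theorem tilted_log_density_W {Y : Type*} [Fintype Y] (α : ℝ) (hα : 1 < α)
    (p q : Y → ℝ) (hp : IsPmf p) (hq : IsPmf q) (hac : AbsCont p q) :
    ∀ y, tilted α p q y ≠ 0 →
      Real.log (tilted α p q y / p y)
        = klD (tilted α p q) p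
          + (α - 1) * (Real.log (p y / q y)
                  - ∑ z, tilted α p q z * Real.log (p z / q z)) := by
  have hα1 : α ≠ 1 := ne_of_gt hα
  have hα0 : α ≠ 0 := by linarith
  have hα1' : 1 - α ≠ 0 := by intro h; apply hα1; linarith
  set R := renyiD α p q with hR
  set S := ∑ z, p z ^ α * q z ^ (1 - α) with hS
  have hSpos : 0 < S := by
    obtain ⟨y0, hy0⟩ : ∃ y0, p y0 ≠ 0 := by
      by_contra h
      push_neg at h
      have h1 := hp.2
      simp [h] at h1
    have hq0 : q y0 ≠ 0 := fun h => hy0 (hac y0 h)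
    have hp0 : 0 < p y0 := lt_of_le_of_ne (hp.1 y0) (Ne.symm hy0)
    have hq0' : 0 < q y0 := lt_of_le_of_ne (hq.1 y0) (Ne.symm hq0)
    apply Finset.sum_pos'
    · exact fun z _ => mul_nonneg (Real.rpow_nonneg (hp.1 z) _) (Real.rpow_nonneg (hq.1 z) _)
    · exact ⟨y0, Finset.mem_univ y0, by positivity⟩
  have hRdef : R = (α - 1)⁻¹ * Real.log S := by rw [hR, renyiD, if_neg hα1]
  have hexp : Real.exp ((1 - α) * R) = S⁻¹ := by
    have hne : α - 1 ≠ 0 := sub_ne_zero.mpr hα1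
    have h2 : (1 - α) * ((α - 1)⁻¹ * Real.log S) = -Real.log S := by
      field_simp
      ring
    rw [hRdef, h2, Real.exp_neg, Real.exp_log hSpos]
  have hpq : ∀ z, tilted α p q z ≠ 0 → p z ≠ 0 ∧ q z ≠ 0 := by
    intro z hz
    constructor
    · intro h; exact hz (by simp [tilted, h, Real.zero_rpow hα0])
    · intro h; exact hz (by simp [tilted, h, Real.zero_rpow hα1'])
  have hlog : ∀ z, tilted α p q z ≠ 0 →
      Real.log (tilted α p q z / p z)
        = (1 - α) * R + (α - 1) * Real.log (p z / q z) := by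
    intro z hz
    obtain ⟨hpz, hqz⟩ := hpq z hz
    have hpz' : 0 < p z := lt_of_le_of_ne (hp.1 z) (Ne.symm hpz)
    have hqz' : 0 < q z := lt_of_le_of_ne (hq.1 z) (Ne.symm hqz)
    have h1 : tilted α p q z = Real.exp ((1 - α) * R) * p z ^ α * q z ^ (1 - α) := rfl
    rw [h1, Real.log_div (by rw [← h1]; exact hz) hpz,
      Real.log_mul (by positivity) (by positivity),
      Real.log_mul (Real.exp_ne_zero _) (by positivity),
      Real.log_exp, Real.log_rpow hpz', Real.log_rpow hqz',
      Real.log_div hpz hqz]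
    ring
  have hsum1 : ∑ z, tilted α p q z = 1 := by
    simp only [tilted]
    simp_rw [mul_assoc]
    rw [← Finset.mul_sum, hexp, ← hS, inv_mul_cancel₀ hSpos.ne']
  have hkl : klD (tilted α p q) p
      = (1 - α) * R + (α - 1) * ∑ z, tilted α p q z * Real.log (p z / q z) := by
    rw [klD]
    have hcong : ∑ z, tilted α p q z * Real.log (tilted α p q z / p z)
        = ∑ z, tilted α p q z * ((1 - α) * R + (α - 1) * Real.log (p z / q z)) := by
      apply Finset.sum_congr rfl
      intro z _
      by_cases hz : tilted α p q z = 0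
      · simp [hz]
      · rw [hlog z hz]
    rw [hcong]
    simp only [mul_add]
    rw [Finset.sum_add_distrib, ← Finset.sum_mul, hsum1, one_mul, Finset.mul_sum]
    congr 1
    apply Finset.sum_congr rfl
    intro z _
    ring
  intro y hy
  rw [hlog y hy, hkl]
  ring
end

section
/- Let W and Q be probability measures with W ≪ Q, α > 1 with D_α(W‖Q) < ∞, and W^{(α)} the order-α tilted measure. Fix τ ∈ ℝ and for each integer k let B_k = { y : τ + k ≤ Λ(y) − E_{W^{(α)}}[Λ] < τ + k + 1 } where Λ = ln(dW/dQ). Then for any measurable event E and any integer k: (i) W^{(α)}(E ∩ B_k) ≤ Q(E ∩ B_k)·e^{D(W^{(α)}‖Q) + α τ + α(k+1)}, and (ii) W^{(α)}(E ∩ B_k) ≥ W(E ∩ B_k)·e^{D(W^{(α)}‖W) + (α−1)τ + (α−1)k}. -/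
open Real BigOperators Finset Filter Topology
open scoped Classical

/-- The centered log-likelihood ratio, centered at its mean under the tilted measure. -/
noncomputable def cLLR {Y : Type*} [Fintype Y] (α : ℝ) (p q : Y → ℝ) (y : Y) : ℝ :=
  Real.log (p y / q y) - ∑ z, tilted α p q z * Real.log (p z / q z)

section Aux
variable {Y : Type*} [Fintype Y] {α : ℝ} {p q : Y → ℝ}

lemma S_pos (hp : IsPmf p) (hq : IsPmf q) (hac : AbsCont p q) :
    0 < ∑ y, p y ^ α * q y ^ (1 - α) := by
  obtain ⟨y, hy⟩ : ∃ y, 0 < p y := by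
    by_contra h
    push_neg at h
    have h0 : ∀ y, p y = 0 := fun y => le_antisymm (h y) (hp.1 y)
    have := hp.2
    rw [Finset.sum_eq_zero (fun y _ => h0 y)] at this
    norm_num at this
  have hqy : 0 < q y := by
    rcases lt_or_eq_of_le (hq.1 y) with h | h
    · exact h
    · exact absurd (hac y h.symm) hy.ne'
  apply Finset.sum_pos' (fun z _ => mul_nonneg (Real.rpow_nonneg (hp.1 z) _)
    (Real.rpow_nonneg (hq.1 z) _))
  exact ⟨y, Finset.mem_univ y, mul_pos (Real.rpow_pos_of_pos hy _) (Real.rpow_pos_of_pos hqy _)⟩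

lemma tilted_nonneg (hp : IsPmf p) (hq : IsPmf q) (y : Y) : 0 ≤ tilted α p q y :=
  mul_nonneg (mul_nonneg (Real.exp_pos _).le (Real.rpow_nonneg (hp.1 y) _))
    (Real.rpow_nonneg (hq.1 y) _)

lemma tilted_zero (hα : 1 < α) (hpy : p y = 0) : tilted α p q y = 0 := by
  unfold tilted
  rw [hpy, Real.zero_rpow (by positivity)]
  ring

lemma tilted_eq_q (hα : 1 < α) (hpy : 0 < p y) (hqy : 0 < q y) :
    tilted α p q y = q y * Real.exp ((1 - α) * renyiD α p q + α * Real.log (p y / q y)) := by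
  have h1 : tilted α p q y =
      Real.exp ((1 - α) * renyiD α p q + α * Real.log (p y) + (1 - α) * Real.log (q y)) := by
    unfold tilted
    rw [Real.rpow_def_of_pos hpy, Real.rpow_def_of_pos hqy, ← Real.exp_add, ← Real.exp_add]
    congr 1
    ring
  rw [h1, ← Real.exp_log hqy, ← Real.exp_add, Real.exp_log hqy, Real.log_div hpy.ne' hqy.ne']
  congr 1
  ring

lemma tilted_eq_p (hα : 1 < α) (hpy : 0 < p y) (hqy : 0 < q y) :
    tilted α p q y = p y * Real.exp ((1 - α) * renyiD α p q + (α - 1) * Real.log (p y / q y)) := by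
  have h1 : tilted α p q y =
      Real.exp ((1 - α) * renyiD α p q + α * Real.log (p y) + (1 - α) * Real.log (q y)) := by
    unfold tilted
    rw [Real.rpow_def_of_pos hpy, Real.rpow_def_of_pos hqy, ← Real.exp_add, ← Real.exp_add]
    congr 1
    ring
  rw [h1, ← Real.exp_log hpy, ← Real.exp_add, Real.exp_log hpy, Real.log_div hpy.ne' hqy.ne']
  congr 1
  ring

lemma sum_tilted (hα : 1 < α) (hp : IsPmf p) (hq : IsPmf q) (hac : AbsCont p q) :
    ∑ y, tilted α p q y = 1 := by
  have hS := S_pos (α := α) hp hq hac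
  unfold tilted renyiD
  rw [if_neg hα.ne']
  rw [show (∑ y, Real.exp ((1 - α) * ((α - 1)⁻¹ *
      Real.log (∑ y, p y ^ α * q y ^ (1 - α)))) * p y ^ α * q y ^ (1 - α)) =
      Real.exp ((1 - α) * ((α - 1)⁻¹ * Real.log (∑ y, p y ^ α * q y ^ (1 - α)))) *
      ∑ y, p y ^ α * q y ^ (1 - α) by rw [Finset.mul_sum]; simp [mul_assoc]]
  have : (1 - α) * ((α - 1)⁻¹ * Real.log (∑ y, p y ^ α * q y ^ (1 - α))) =
      -Real.log (∑ y, p y ^ α * q y ^ (1 - α)) := by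
    have : α - 1 ≠ 0 := by linarith
    field_simp
    ring
  rw [this, Real.exp_neg, Real.exp_log hS, inv_mul_cancel₀ hS.ne']

lemma klD_tilted_q (hα : 1 < α) (hp : IsPmf p) (hq : IsPmf q) (hac : AbsCont p q) :
    klD (tilted α p q) q = (1 - α) * renyiD α p q +
      α * ∑ z, tilted α p q z * Real.log (p z / q z) := by
  unfold klD
  have key : ∀ y, tilted α p q y * Real.log (tilted α p q y / q y) =
      tilted α p q y * ((1 - α) * renyiD α p q) +
      α * (tilted α p q y * Real.log (p y / q y)) := by
    intro y
    rcases eq_or_lt_of_le (hq.1 y) with hqy | hqy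
    · rw [tilted_zero hα (hac y hqy.symm)]; ring
    rcases eq_or_lt_of_le (hp.1 y) with hpy | hpy
    · rw [tilted_zero hα hpy.symm]; ring
    have h := tilted_eq_q (q := q) hα hpy hqy
    have hdiv : tilted α p q y / q y =
        Real.exp ((1 - α) * renyiD α p q + α * Real.log (p y / q y)) := by
      rw [h, mul_div_cancel_left₀ _ hqy.ne']
    rw [hdiv, Real.log_exp]
    ring
  rw [Finset.sum_congr rfl (fun y _ => key y), Finset.sum_add_distrib, ← Finset.sum_mul,
    sum_tilted hα hp hq hac, ← Finset.mul_sum]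
  ring

lemma klD_tilted_p (hα : 1 < α) (hp : IsPmf p) (hq : IsPmf q) (hac : AbsCont p q) :
    klD (tilted α p q) p = (1 - α) * renyiD α p q +
      (α - 1) * ∑ z, tilted α p q z * Real.log (p z / q z) := by
  unfold klD
  have key : ∀ y, tilted α p q y * Real.log (tilted α p q y / p y) =
      tilted α p q y * ((1 - α) * renyiD α p q) +
      (α - 1) * (tilted α p q y * Real.log (p y / q y)) := by
    intro y
    rcases eq_or_lt_of_le (hq.1 y) with hqy | hqy
    · rw [tilted_zero hα (hac y hqy.symm)]; ring
    rcases eq_or_lt_of_le (hp.1 y) with hpy | hpy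
    · rw [tilted_zero hα hpy.symm]; ring
    have h := tilted_eq_p (q := q) hα hpy hqy
    have hdiv : tilted α p q y / p y =
        Real.exp ((1 - α) * renyiD α p q + (α - 1) * Real.log (p y / q y)) := by
      rw [h, mul_div_cancel_left₀ _ hpy.ne']
    rw [hdiv, Real.log_exp]
    ring
  rw [Finset.sum_congr rfl (fun y _ => key y), Finset.sum_add_distrib, ← Finset.sum_mul,
    sum_tilted hα hp hq hac, ← Finset.mul_sum]
  ring

end Aux

/-- change-of-measure bounds on the slices B_k. -/
theorem tilted_slice_bounds {Y : Type*} [Fintype Y] (α : ℝ) (hα : 1 < α)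
    (p q : Y → ℝ) (hp : IsPmf p) (hq : IsPmf q) (hac : AbsCont p q)
    (τ : ℝ) (k : ℤ) (E : Finset Y) :
    (∑ y ∈ E, (if τ + k ≤ cLLR α p q y ∧ cLLR α p q y < τ + k + 1
        then tilted α p q y else 0))
      ≤ (∑ y ∈ E, (if τ + k ≤ cLLR α p q y ∧ cLLR α p q y < τ + k + 1
          then q y else 0))
        * Real.exp (klD (tilted α p q) q + α * τ + α * (k + 1))
    ∧ (∑ y ∈ E, (if τ + k ≤ cLLR α p q y ∧ cLLR α p q y < τ + k + 1
        then tilted α p q y else 0))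
      ≥ (∑ y ∈ E, (if τ + k ≤ cLLR α p q y ∧ cLLR α p q y < τ + k + 1
          then p y else 0))
        * Real.exp (klD (tilted α p q) p + (α - 1) * τ + (α - 1) * k) := by
  set μ := ∑ z, tilted α p q z * Real.log (p z / q z) with hμ
  have hkq := klD_tilted_q hα hp hq hac
  have hkp := klD_tilted_p hα hp hq hac
  constructor
  · rw [Finset.sum_mul]
    apply Finset.sum_le_sum
    intro y _
    split_ifs with h
    · rcases eq_or_lt_of_le (hq.1 y) with hqy | hqy
      · rw [tilted_zero hα (hac y hqy.symm), ← hqy]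
        positivity
      rcases eq_or_lt_of_le (hp.1 y) with hpy | hpy
      · rw [tilted_zero hα hpy.symm]
        positivity
      rw [tilted_eq_q hα hpy hqy]
      apply mul_le_mul_of_nonneg_left _ hqy.le
      rw [Real.exp_le_exp, hkq]
      have h2 := h.2
      unfold cLLR at h2
      rw [← hμ] at h2
      nlinarith [h2, hα]
    · simp
  · rw [ge_iff_le, Finset.sum_mul]
    apply Finset.sum_le_sum
    intro y _
    split_ifs with h
    · rcases eq_or_lt_of_le (hq.1 y) with hqy | hqy
      · rw [hac y hqy.symm, zero_mul]
        exact tilted_nonneg hp hq y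
      rcases eq_or_lt_of_le (hp.1 y) with hpy | hpy
      · rw [← hpy, zero_mul]
        exact tilted_nonneg hp hq y
      rw [tilted_eq_p hα hpy hqy]
      apply mul_le_mul_of_nonneg_left _ hpy.le
      rw [Real.exp_le_exp, hkp]
      have h1 := h.1
      unfold cLLR at h1
      rw [← hμ] at h1
      nlinarith [h1, hα]
    · simp
end

section
/- Convergence of tilted measures: let W, Q be probability measures, W₁ the normalized absolutely continuous component of W with respect to Q (assumed nonzero), and suppose D_β(W₁‖Q) < ∞ for some β > 1. Then the order-α tilted measures W^{(α)} (defined from W₁) converge in total variation to W₁ as α ↑ 1, and D(W^{(α)}‖Q) → D(W₁‖Q) as α ↑ 1. -/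
open Real BigOperators Finset Filter Topology
open scoped Classical

/-- convergence of the tilted measures as the order increases to one. -/
theorem tilted_convergence {Y : Type*} [Fintype Y]
    (w q : Y → ℝ) (hw : IsPmf w) (hq : IsPmf q)
    (m : ℝ) (hm : m = ∑ y, (if q y = 0 then 0 else w y)) (hm0 : m ≠ 0)
    (w1 : Y → ℝ) (hw1 : w1 = fun y => (if q y = 0 then 0 else w y) / m)
    (β : ℝ) (hβ : 1 < β) :
    Tendsto (fun a : ℝ => ∑ y, |tilted a w1 q y - w1 y|) (𝓝[<] (1 : ℝ)) (𝓝 0)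
    ∧ Tendsto (fun a : ℝ => klD (tilted a w1 q) q) (𝓝[<] (1 : ℝ))
        (𝓝 (klD w1 q)) := by
  classical
  -- basic positivity facts
  have hmnn : 0 ≤ m := by
    rw [hm]
    exact Finset.sum_nonneg fun y _ => by split <;> simp [hw.1 y]
  have hmpos : 0 < m := lt_of_le_of_ne hmnn (Ne.symm hm0)
  have hw1nn : ∀ y, 0 ≤ w1 y := by
    intro y; rw [hw1]; dsimp only
    split
    · simp
    · exact div_nonneg (hw.1 y) hmnn
  have hw1ac : ∀ y, q y = 0 → w1 y = 0 := by
    intro y hy; rw [hw1]; simp [hy]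
  have hw1sum : ∑ y, w1 y = 1 := by
    rw [hw1]
    simp only
    rw [← Finset.sum_div, ← hm, div_self hm0]
  -- eventually a ∈ (0,1)
  have hev : ∀ᶠ a : ℝ in 𝓝[<] (1 : ℝ), 0 < a ∧ a < 1 := by
    filter_upwards [eventually_nhdsWithin_of_eventually_nhds
      (eventually_gt_nhds (by norm_num : (0:ℝ) < 1)), self_mem_nhdsWithin] with a h1 h2
    exact ⟨h1, h2⟩
  -- pointwise convergence of w1^a * q^(1-a)
  set Z : ℝ → ℝ := fun a => ∑ y, w1 y ^ a * q y ^ (1 - a) with hZdef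
  have hg : ∀ y, Tendsto (fun a : ℝ => w1 y ^ a * q y ^ (1 - a)) (𝓝[<] 1) (𝓝 (w1 y)) := by
    intro y
    rcases eq_or_lt_of_le (hw1nn y) with hw0 | hw0
    · -- w1 y = 0 : eventually 0
      have : ∀ᶠ a : ℝ in 𝓝[<] 1, w1 y ^ a * q y ^ (1 - a) = w1 y := by
        filter_upwards [hev] with a ⟨ha0, _⟩
        rw [← hw0, Real.zero_rpow (ne_of_gt ha0), zero_mul]
      exact Tendsto.congr' (this.mono fun a h => h.symm) (by rw [← hw0]; exact tendsto_const_nhds)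
    · -- w1 y > 0, hence q y > 0
      have hqy : 0 < q y := by
        rcases eq_or_lt_of_le (hq.1 y) with h | h
        · exact absurd (hw1ac y h.symm) (ne_of_gt hw0)
        · exact h
      have hc : Continuous fun a : ℝ =>
          Real.exp (a * Real.log (w1 y)) * Real.exp ((1 - a) * Real.log (q y)) :=
        (Real.continuous_exp.comp (continuous_id.mul continuous_const)).mul
          (Real.continuous_exp.comp ((continuous_const.sub continuous_id).mul continuous_const))
      have heq : ∀ a : ℝ, w1 y ^ a * q y ^ (1 - a)
          = Real.exp (a * Real.log (w1 y)) * Real.exp ((1 - a) * Real.log (q y)) := by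
        intro a
        rw [Real.rpow_def_of_pos hw0, Real.rpow_def_of_pos hqy, mul_comm (Real.log (w1 y)),
          mul_comm (Real.log (q y))]
      have : Tendsto (fun a : ℝ => Real.exp (a * Real.log (w1 y)) *
            Real.exp ((1 - a) * Real.log (q y))) (𝓝[<] 1)
          (𝓝 (Real.exp (1 * Real.log (w1 y)) * Real.exp ((1 - 1) * Real.log (q y)))) :=
        (hc.tendsto 1).mono_left nhdsWithin_le_nhds
      simp only [one_mul, sub_self, zero_mul, Real.exp_zero, mul_one, Real.exp_log hw0] at this
      exact Tendsto.congr (fun a => (heq a).symm) this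
  have hZt : Tendsto Z (𝓝[<] 1) (𝓝 1) := by
    have := tendsto_finset_sum Finset.univ (fun y _ => hg y)
    rwa [hw1sum] at this
  have hZpos : ∀ᶠ a : ℝ in 𝓝[<] 1, 0 < Z a :=
    hZt.eventually (eventually_gt_nhds one_pos)
  -- rewrite tilted
  have htilt_eq : ∀ᶠ a : ℝ in 𝓝[<] 1, ∀ y,
      tilted a w1 q y = (Z a)⁻¹ * (w1 y ^ a * q y ^ (1 - a)) := by
    filter_upwards [hev, hZpos] with a ⟨_, ha1⟩ hZa y
    have hane : a ≠ 1 := ne_of_lt ha1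
    have h1 : (1 - a) * renyiD a w1 q = -Real.log (Z a) := by
      rw [renyiD, if_neg hane]
      have : (1 - a) * ((a - 1)⁻¹ * Real.log (Z a)) = -Real.log (Z a) := by
        rw [← mul_assoc]
        have : (1 - a) * (a - 1)⁻¹ = -1 := by
          rw [show (1 - a) = -(a - 1) by ring, neg_mul,
            mul_inv_cancel₀ (sub_ne_zero.mpr hane)]
        rw [this]; ring
      exact this
    rw [tilted, h1, Real.exp_neg, Real.exp_log hZa, mul_assoc]
  have htilt : ∀ y, Tendsto (fun a : ℝ => tilted a w1 q y) (𝓝[<] 1) (𝓝 (w1 y)) := by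
    intro y
    have : Tendsto (fun a : ℝ => (Z a)⁻¹ * (w1 y ^ a * q y ^ (1 - a))) (𝓝[<] 1)
        (𝓝 ((1:ℝ)⁻¹ * w1 y)) := (hZt.inv₀ one_ne_zero).mul (hg y)
    rw [inv_one, one_mul] at this
    exact Tendsto.congr' (htilt_eq.mono fun a h => (h y).symm) this
  constructor
  · -- total variation
    have : Tendsto (fun a : ℝ => ∑ y, |tilted a w1 q y - w1 y|) (𝓝[<] 1)
        (𝓝 (∑ y : Y, |w1 y - w1 y|)) :=
      tendsto_finset_sum _ fun y _ => ((htilt y).sub tendsto_const_nhds).abs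
    simpa using this
  · -- KL divergence
    unfold klD
    apply tendsto_finset_sum
    intro y _
    rcases eq_or_lt_of_le (hw1nn y) with hw0 | hw0
    · -- w1 y = 0 : tilted eventually 0
      have hev0 : ∀ᶠ a : ℝ in 𝓝[<] 1,
          tilted a w1 q y * Real.log (tilted a w1 q y / q y) = 0 := by
        filter_upwards [hev, htilt_eq] with a ⟨ha0, _⟩ heq
        rw [heq y, ← hw0, Real.zero_rpow (ne_of_gt ha0), zero_mul, mul_zero, zero_mul]
      have : w1 y * Real.log (w1 y / q y) = 0 := by rw [← hw0, zero_mul]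
      rw [this]
      exact Tendsto.congr' (hev0.mono fun a h => h.symm) tendsto_const_nhds
    · -- w1 y > 0
      have hqy : 0 < q y := by
        rcases eq_or_lt_of_le (hq.1 y) with h | h
        · exact absurd (hw1ac y h.symm) (ne_of_gt hw0)
        · exact h
      have hcont : ContinuousAt (fun x : ℝ => x * Real.log (x / q y)) (w1 y) := by
        apply ContinuousAt.mul continuousAt_id
        exact (Real.continuousAt_log (by positivity)).comp
          ((continuousAt_id).div_const _)
      exact hcont.tendsto.comp (htilt y)
end
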